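/- Let G be a group of nilpotency class at most 3 in which for all x, y, z the identity [x,y,z] = G₄(g₄(x̄,ȳ), z̄) + G₅(g₅(x̄,z̄), ȳ) + G₆(g₆(ȳ,z̄), x̄) holds, where x̄ denotes the image in the abelianization, g₄, g₅, g₆ are bilinear maps into finite abelian groups of sizes c₄, c₅, c₆ and G₄, G₅, G₆ are bilinear into γ₃(G). Then d₂(G) ≥ (c₄c₅c₆)⁻¹. -/

import Mathlib

lemma aux_card_le_of_hom {G C : Type*} [Group G] [Group C] [Finite G] [Finite C]
    (f : G →* C) : Nat.card G ≤ Nat.card C * Nat.card f.ker := by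
  rw [Subgroup.card_eq_card_quotient_mul_card_subgroup f.ker]
  refine Nat.mul_le_mul_right _ ?_
  rw [Nat.card_congr (QuotientGroup.quotientKerEquivRange f).toEquiv]
  exact Nat.card_le_card_of_injective _ Subtype.val_injective



/-- If `G` has class at most 3 and the triple commutator (with `[x,y] = x⁻¹y⁻¹xy`)
has an expression `[x,y,z] = G₄(g₄(x̄,ȳ),z̄)·G₅(g₅(x̄,z̄),ȳ)·G₆(g₆(ȳ,z̄),x̄)` where the
`gᵢ` are bilinear into finite abelian groups `Cᵢ` and the `Gᵢ` are bilinear into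
`γ₃(G)`, then `d₂(G) ≥ (|C₄||C₅||C₆|)⁻¹`. -/
theorem stmt_12 {G : Type*} [Group G] [Finite G]
    (hcl : (⊤ : Subgroup G).lowerCentralSeries 3 = ⊥)
    (C₄ C₅ C₆ : Type*) [CommGroup C₄] [Finite C₄] [CommGroup C₅] [Finite C₅]
    [CommGroup C₆] [Finite C₆]
    (g₄ : (G ⧸ commutator G) → (G ⧸ commutator G) → C₄)
    (g₅ : (G ⧸ commutator G) → (G ⧸ commutator G) → C₅)
    (g₆ : (G ⧸ commutator G) → (G ⧸ commutator G) → C₆)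
    (G₄ : C₄ → (G ⧸ commutator G) → G)
    (G₅ : C₅ → (G ⧸ commutator G) → G)
    (G₆ : C₆ → (G ⧸ commutator G) → G)
    (hg₄l : ∀ a a' b, g₄ (a * a') b = g₄ a b * g₄ a' b)
    (hg₄r : ∀ a b b', g₄ a (b * b') = g₄ a b * g₄ a b')
    (hg₅l : ∀ a a' b, g₅ (a * a') b = g₅ a b * g₅ a' b)
    (hg₅r : ∀ a b b', g₅ a (b * b') = g₅ a b * g₅ a b')
    (hg₆l : ∀ a a' b, g₆ (a * a') b = g₆ a b * g₆ a' b)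
    (hg₆r : ∀ a b b', g₆ a (b * b') = g₆ a b * g₆ a b')
    (hG₄l : ∀ u u' v, G₄ (u * u') v = G₄ u v * G₄ u' v)
    (hG₄r : ∀ u v v', G₄ u (v * v') = G₄ u v * G₄ u v')
    (hG₅l : ∀ u u' v, G₅ (u * u') v = G₅ u v * G₅ u' v)
    (hG₅r : ∀ u v v', G₅ u (v * v') = G₅ u v * G₅ u v')
    (hG₆l : ∀ u u' v, G₆ (u * u') v = G₆ u v * G₆ u' v)
    (hG₆r : ∀ u v v', G₆ u (v * v') = G₆ u v * G₆ u v')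
    (hG₄mem : ∀ u v, G₄ u v ∈ (⊤ : Subgroup G).lowerCentralSeries 2)
    (hG₅mem : ∀ u v, G₅ u v ∈ (⊤ : Subgroup G).lowerCentralSeries 2)
    (hG₆mem : ∀ u v, G₆ u v ∈ (⊤ : Subgroup G).lowerCentralSeries 2)
    (hid : ∀ x y z : G,
      (x⁻¹ * y⁻¹ * x * y)⁻¹ * z⁻¹ * (x⁻¹ * y⁻¹ * x * y) * z =
        G₄ (g₄ (QuotientGroup.mk x) (QuotientGroup.mk y)) (QuotientGroup.mk z) *
        G₅ (g₅ (QuotientGroup.mk x) (QuotientGroup.mk z)) (QuotientGroup.mk y) *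
        G₆ (g₆ (QuotientGroup.mk y) (QuotientGroup.mk z)) (QuotientGroup.mk x)) :
    (Nat.card G) ^ 3 ≤
      Nat.card C₄ * Nat.card C₅ * Nat.card C₆ *
        Nat.card {t : G × G × G //
          (t.1⁻¹ * t.2.1⁻¹ * t.1 * t.2.1)⁻¹ * t.2.2⁻¹ *
            (t.1⁻¹ * t.2.1⁻¹ * t.1 * t.2.1) * t.2.2 = 1} := by
  classical
  have _inst : Fintype G := Fintype.ofFinite G
  have _inst4 : Fintype C₄ := Fintype.ofFinite C₄
  have _inst5 : Fintype C₅ := Fintype.ofFinite C₅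
  have _inst6 : Fintype C₆ := Fintype.ofFinite C₆
  have hG₄1 : ∀ v, G₄ 1 v = 1 := by
    intro v; have h := hG₄l 1 1 v; rw [one_mul] at h; exact left_eq_mul.mp h
  have hG₅1 : ∀ v, G₅ 1 v = 1 := by
    intro v; have h := hG₅l 1 1 v; rw [one_mul] at h; exact left_eq_mul.mp h
  have hG₆1 : ∀ v, G₆ 1 v = 1 := by
    intro v; have h := hG₆l 1 1 v; rw [one_mul] at h; exact left_eq_mul.mp h
  set P : G → G → G → Prop := fun x y z =>
    g₄ (QuotientGroup.mk x) (QuotientGroup.mk y) = 1 ∧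
    g₅ (QuotientGroup.mk x) (QuotientGroup.mk z) = 1 ∧
    g₆ (QuotientGroup.mk y) (QuotientGroup.mk z) = 1 with hP
  have hsol : ∀ x y z : G, P x y z →
      (x⁻¹ * y⁻¹ * x * y)⁻¹ * z⁻¹ * (x⁻¹ * y⁻¹ * x * y) * z = 1 := by
    intro x y z hxyz
    obtain ⟨h4, h5, h6⟩ := hxyz
    rw [hid, h4, h5, h6, hG₄1, hG₅1, hG₆1, one_mul, one_mul]
  have h1 : Nat.card {t : G × G × G // P t.1 t.2.1 t.2.2} ≤
      Nat.card {t : G × G × G //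
        (t.1⁻¹ * t.2.1⁻¹ * t.1 * t.2.1)⁻¹ * t.2.2⁻¹ *
          (t.1⁻¹ * t.2.1⁻¹ * t.1 * t.2.1) * t.2.2 = 1} := by
    refine Nat.card_le_card_of_injective
      (fun t => ⟨t.1, hsol t.1.1 t.1.2.1 t.1.2.2 t.2⟩) ?_
    intro a b h
    have h2 := congrArg Subtype.val h
    exact Subtype.ext h2
  -- homomorphisms whose kernels are the fibers
  let φ : G → G →* C₄ := fun x => MonoidHom.mk'
    (fun y => g₄ (QuotientGroup.mk x) (QuotientGroup.mk y))
    (fun a b => hg₄r (QuotientGroup.mk x) (QuotientGroup.mk a) (QuotientGroup.mk b))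
  let ψ : G → G → G →* C₅ × C₆ := fun x y => MonoidHom.mk'
    (fun z => (g₅ (QuotientGroup.mk x) (QuotientGroup.mk z),
               g₆ (QuotientGroup.mk y) (QuotientGroup.mk z)))
    (fun a b => by
      have hmk : (QuotientGroup.mk (a*b) : G ⧸ commutator G) =
          QuotientGroup.mk a * QuotientGroup.mk b := rfl
      simp only [hmk, hg₅r, hg₆r, Prod.mk_mul_mk])
  have hφ : ∀ x : G, Nat.card G ≤ Nat.card C₄ * Nat.card (φ x).ker :=
    fun x => aux_card_le_of_hom (φ x)
  have hψ : ∀ x y : G, Nat.card G ≤ (Nat.card C₅ * Nat.card C₆) * Nat.card (ψ x y).ker := by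
    intro x y
    have h := aux_card_le_of_hom (ψ x y)
    rwa [Nat.card_prod] at h
  -- the good set as an iterated sigma type
  let e : {t : G × G × G // P t.1 t.2.1 t.2.2} ≃
      Σ x : G, Σ y : (φ x).ker, (ψ x (y : G)).ker :=
    { toFun := fun t => ⟨t.1.1, ⟨⟨t.1.2.1, t.2.1⟩, ⟨t.1.2.2, Prod.ext t.2.2.1 t.2.2.2⟩⟩⟩
      invFun := fun s => ⟨(s.1, s.2.1, s.2.2),
        ⟨s.2.1.2, congrArg Prod.fst s.2.2.2, congrArg Prod.snd s.2.2.2⟩⟩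
      left_inv := fun t => rfl
      right_inv := fun s => rfl }
  have hcard : Nat.card {t : G × G × G // P t.1 t.2.1 t.2.2} =
      ∑ x : G, ∑ y : (φ x).ker, Nat.card (ψ x (y : G)).ker := by
    rw [Nat.card_congr e, Nat.card_eq_fintype_card, Fintype.card_sigma]
    congr 1
    ext x
    rw [Fintype.card_sigma]
    congr 1
    ext y
    rw [Nat.card_eq_fintype_card]
  -- main counting
  have key : Nat.card G ^ 3 ≤ (Nat.card C₄ * (Nat.card C₅ * Nat.card C₆)) *
      Nat.card {t : G × G × G // P t.1 t.2.1 t.2.2} := by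
    rw [hcard, Finset.mul_sum]
    have step : ∀ x : G, Nat.card G * Nat.card G ≤
        Nat.card C₄ * (Nat.card C₅ * Nat.card C₆) *
          ∑ y : (φ x).ker, Nat.card (ψ x (y : G)).ker := by
      intro x
      calc Nat.card G * Nat.card G
          ≤ (Nat.card C₄ * Nat.card (φ x).ker) * Nat.card G :=
            Nat.mul_le_mul_right _ (hφ x)
        _ = Nat.card C₄ * (Nat.card (φ x).ker * Nat.card G) := by ring
        _ = Nat.card C₄ * ∑ _y : (φ x).ker, Nat.card G := by
            simp [Finset.sum_const, Finset.card_univ, Nat.card_eq_fintype_card, mul_comm]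
        _ ≤ Nat.card C₄ * ∑ y : (φ x).ker,
              (Nat.card C₅ * Nat.card C₆) * Nat.card (ψ x (y : G)).ker :=
            Nat.mul_le_mul_left _ (Finset.sum_le_sum (fun y _ => hψ x (y : G)))
        _ = Nat.card C₄ * (Nat.card C₅ * Nat.card C₆) *
              ∑ y : (φ x).ker, Nat.card (ψ x (y : G)).ker := by
            simp [Finset.mul_sum, mul_assoc]
    calc Nat.card G ^ 3 = ∑ _x : G, Nat.card G * Nat.card G := by
          simp [Finset.sum_const, Finset.card_univ, Nat.card_eq_fintype_card]; ring
      _ ≤ ∑ x : G, Nat.card C₄ * (Nat.card C₅ * Nat.card C₆) *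
            ∑ y : (φ x).ker, Nat.card (ψ x (y : G)).ker :=
          Finset.sum_le_sum (fun x _ => step x)
  calc Nat.card G ^ 3
      ≤ (Nat.card C₄ * (Nat.card C₅ * Nat.card C₆)) *
          Nat.card {t : G × G × G // P t.1 t.2.1 t.2.2} := key
    _ ≤ (Nat.card C₄ * (Nat.card C₅ * Nat.card C₆)) *
          Nat.card {t : G × G × G //
            (t.1⁻¹ * t.2.1⁻¹ * t.1 * t.2.1)⁻¹ * t.2.2⁻¹ *
              (t.1⁻¹ * t.2.1⁻¹ * t.1 * t.2.1) * t.2.2 = 1} :=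
        Nat.mul_le_mul_left _ h1
    _ = _ := by ring
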